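/- Let e1, e2 be odd integers, e3 = −e1−e2 with v₂(e3) = 1, n odd, and d1, d2, d3 odd integers satisfying d1·d2·d3 ∈ (ℚ^×)², d1 ≡ 1 (mod 4), d2 ≡ d3 ≡ −1 (mod 4), and the Hilbert symbol conditions [e1·n·d3, d1]₂ = [e2·n·d1, d2]₂ = [e3·n·d2, d3]₂ = 0. Then (d1 − e2·n) − (d2 + e1·n) ≡ 0 (mod 8) and e2·n ≡ d1 (mod 4). -/

import Mathlib

/-- The additive Hilbert symbol `[a, b]₂ ∈ 𝔽₂` over `ℚ₂` vanishes
(equivalently, the multiplicative Hilbert symbol `(a, b)₂ = 1`) iff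
`z² = a·x² + b·y²` has a nontrivial solution over `ℚ₂`. -/
def HilbertVanish2 (a b : ℤ) : Prop :=
  ∃ x y z : ℚ_[2], ¬ (x = 0 ∧ y = 0 ∧ z = 0) ∧
    (a : ℚ_[2]) * x ^ 2 + (b : ℚ_[2]) * y ^ 2 = z ^ 2

open PadicInt

/-- mod 8 square values: nothing needed, decide lemmas below -/

private lemma cast2 : ((2:ℕ) : ℤ_[2]) = (2 : ℤ_[2]) := by norm_num

private lemma val_two_mul (w : ℤ_[2]) (hw : w ≠ 0) :
    (2 * w).valuation = 1 + w.valuation := by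
  have := PadicInt.valuation_p_pow_mul (p := 2) 1 w hw
  simpa [cast2] using this

private lemma val_two_mul_le (w : ℤ_[2]) : w.valuation ≤ (2 * w).valuation := by
  by_cases hw : w = 0
  · simp [hw]
  · rw [val_two_mul w hw]; omega

private lemma descent (a b : ℤ) :
    ∀ N : ℕ, ∀ X Y Z : ℤ_[2],
    (X.valuation + Y.valuation + Z.valuation) ≤ N →
    ¬(X = 0 ∧ Y = 0 ∧ Z = 0) →
    (a : ℤ_[2]) * X ^ 2 + (b : ℤ_[2]) * Y ^ 2 = Z ^ 2 →
    ∃ X' Y' Z' : ℤ_[2], (¬ 2 ∣ X' ∨ ¬ 2 ∣ Y' ∨ ¬ 2 ∣ Z') ∧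
      (a : ℤ_[2]) * X' ^ 2 + (b : ℤ_[2]) * Y' ^ 2 = Z' ^ 2 := by
  intro N
  induction N using Nat.strong_induction_on with
  | _ N IH =>
    intro X Y Z hm h0 heq
    by_cases hpar : (2 ∣ X) ∧ (2 ∣ Y) ∧ (2 ∣ Z)
    · obtain ⟨⟨X₁, hX⟩, ⟨Y₁, hY⟩, ⟨Z₁, hZ⟩⟩ := hpar
      subst hX hY hZ
      have h4 : (4 : ℤ_[2]) ≠ 0 := by norm_num
      have heq' : (a : ℤ_[2]) * X₁ ^ 2 + (b : ℤ_[2]) * Y₁ ^ 2 = Z₁ ^ 2 := by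
        apply mul_left_cancel₀ h4
        ring_nf
        ring_nf at heq
        linear_combination heq
      have h0' : ¬(X₁ = 0 ∧ Y₁ = 0 ∧ Z₁ = 0) := by
        rintro ⟨rfl, rfl, rfl⟩; exact h0 (by norm_num)
      -- measure decreases
      have hXle := val_two_mul_le X₁
      have hYle := val_two_mul_le Y₁
      have hZle := val_two_mul_le Z₁
      have hXn := Nat.zero_le X₁.valuation
      have hYn := Nat.zero_le Y₁.valuation
      have hZn := Nat.zero_le Z₁.valuation
      have hstrict : X₁.valuation + Y₁.valuation + Z₁.valuation + 1 ≤
          (2*X₁).valuation + (2*Y₁).valuation + (2*Z₁).valuation := by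
        rcases not_and_or.mp h0' with h | h
        · rw [val_two_mul X₁ h]; omega
        · rcases not_and_or.mp (by tauto : ¬(Y₁ = 0 ∧ Z₁ = 0)) with h' | h'
          · rw [val_two_mul Y₁ h']; omega
          · rw [val_two_mul Z₁ h']; omega
      exact IH (X₁.valuation + Y₁.valuation + Z₁.valuation) (by omega)
        X₁ Y₁ Z₁ le_rfl h0' heq'
    · push_neg at hpar
      refine ⟨X, Y, Z, ?_, heq⟩
      by_cases h1 : 2 ∣ X
      · by_cases h2 : 2 ∣ Y
        · exact Or.inr (Or.inr (hpar h1 h2))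
        · exact Or.inr (Or.inl h2)
      · exact Or.inl h1

private lemma norm_two_q : ‖(2 : ℚ_[2])‖ = 2⁻¹ := by
  have := @Padic.norm_p 2 _
  simpa using this

private lemma exists_pow_norm_le (x : ℚ_[2]) : ∃ n : ℕ, ‖(2:ℚ_[2])^n * x‖ ≤ 1 := by
  rcases le_or_gt ‖x‖ 1 with h | h
  · exact ⟨0, by simpa⟩
  · have hx0 : (0:ℝ) < ‖x‖⁻¹ := by positivity
    obtain ⟨n, hn⟩ := exists_pow_lt_of_lt_one hx0 (show ‖(2:ℚ_[2])‖ < 1 by rw [norm_two_q]; norm_num)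
    refine ⟨n, ?_⟩
    rw [_root_.norm_mul, _root_.norm_pow]
    have hxpos : (0:ℝ) < ‖x‖ := by positivity
    calc ‖(2:ℚ_[2])‖ ^ n * ‖x‖ ≤ ‖x‖⁻¹ * ‖x‖ := by
          apply mul_le_mul_of_nonneg_right (le_of_lt hn) (norm_nonneg x)
      _ = 1 := inv_mul_cancel₀ (ne_of_gt hxpos)

private lemma pow_norm_le_mono (x : ℚ_[2]) (n m : ℕ) (hnm : n ≤ m)
    (h : ‖(2:ℚ_[2])^n * x‖ ≤ 1) : ‖(2:ℚ_[2])^m * x‖ ≤ 1 := by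
  have : (2:ℚ_[2])^m * x = (2:ℚ_[2])^(m-n) * ((2:ℚ_[2])^n * x) := by
    rw [← mul_assoc, ← pow_add, Nat.sub_add_cancel hnm]
  rw [this, _root_.norm_mul, _root_.norm_pow, norm_two_q]
  calc ((2:ℝ)⁻¹)^(m-n) * ‖(2:ℚ_[2])^n * x‖ ≤ 1 * 1 := by
        apply mul_le_mul _ h (norm_nonneg _) zero_le_one
        apply pow_le_one₀ <;> norm_num
    _ = 1 := by norm_num

private lemma hv_normalize (a b : ℤ) (x y z : ℚ_[2]) (h0 : ¬(x = 0 ∧ y = 0 ∧ z = 0))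
    (heq : (a : ℚ_[2]) * x ^ 2 + (b : ℚ_[2]) * y ^ 2 = z ^ 2) :
    ∃ X Y Z : ℤ_[2], ¬(X = 0 ∧ Y = 0 ∧ Z = 0) ∧
      (a : ℤ_[2]) * X ^ 2 + (b : ℤ_[2]) * Y ^ 2 = Z ^ 2 := by
  obtain ⟨n1, h1⟩ := exists_pow_norm_le x
  obtain ⟨n2, h2⟩ := exists_pow_norm_le y
  obtain ⟨n3, h3⟩ := exists_pow_norm_le z
  set n := max n1 (max n2 n3) with hn
  have hx : ‖(2:ℚ_[2])^n * x‖ ≤ 1 := pow_norm_le_mono x n1 n (by omega) h1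
  have hy : ‖(2:ℚ_[2])^n * y‖ ≤ 1 := pow_norm_le_mono y n2 n (by omega) h2
  have hz : ‖(2:ℚ_[2])^n * z‖ ≤ 1 := pow_norm_le_mono z n3 n (by omega) h3
  refine ⟨⟨_, hx⟩, ⟨_, hy⟩, ⟨_, hz⟩, ?_, ?_⟩
  · rintro ⟨hX, hY, hZ⟩
    have h2n : (2:ℚ_[2])^n ≠ 0 := pow_ne_zero _ two_ne_zero
    apply h0
    refine ⟨?_, ?_, ?_⟩
    · have := congrArg (Subtype.val) hX
      simpa [h2n] using this
    · have := congrArg (Subtype.val) hY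
      simpa [h2n] using this
    · have := congrArg (Subtype.val) hZ
      simpa [h2n] using this
  · apply Subtype.ext
    push_cast
    show (a:ℚ_[2]) * ((2:ℚ_[2])^n * x)^2 + (b:ℚ_[2]) * ((2:ℚ_[2])^n * y)^2 = ((2:ℚ_[2])^n * z)^2
    linear_combination ((2:ℚ_[2])^n)^2 * heq

private lemma odd_image (x : ℤ_[2]) (hx : ¬ (2 ∣ x)) :
    PadicInt.toZModPow 3 x ∈ ({1,3,5,7} : Finset (ZMod (2^3))) := by
  by_contra hc
  apply hx
  set c := PadicInt.toZModPow 3 x with hcdef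
  have hval : 2 ∣ c.val := by
    have : ∀ d : ZMod (2^3), d ∉ ({1,3,5,7} : Finset (ZMod (2^3))) → 2 ∣ d.val := by decide
    exact this c hc
  obtain ⟨j, hj⟩ := hval
  have hker : PadicInt.toZModPow 3 (x - (c.val : ℤ_[2])) = 0 := by
    rw [map_sub, map_natCast, ZMod.natCast_zmod_val]
    exact sub_self c
  have hmem : x - (c.val : ℤ_[2]) ∈
      RingHom.ker (PadicInt.toZModPow 3 : ℤ_[2] →+* ZMod (2^3)) := hker
  rw [PadicInt.ker_toZModPow, Ideal.mem_span_singleton] at hmem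
  obtain ⟨t, ht⟩ := hmem
  refine ⟨(j : ℤ_[2]) + 4 * t, ?_⟩
  have hx' : x = (c.val : ℤ_[2]) + ((2:ℕ) : ℤ_[2])^3 * t := by linear_combination ht
  rw [hx', hj]
  push_cast
  ring

private lemma key_mod8 (a b : ℤ) (x y z : ℚ_[2]) (h0 : ¬(x = 0 ∧ y = 0 ∧ z = 0))
    (heq : (a : ℚ_[2]) * x ^ 2 + (b : ℚ_[2]) * y ^ 2 = z ^ 2) :
    ∃ X Y Z : ZMod (2^3),
      (X ∈ ({1,3,5,7} : Finset (ZMod (2^3))) ∨ Y ∈ ({1,3,5,7} : Finset (ZMod (2^3))) ∨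
        Z ∈ ({1,3,5,7} : Finset (ZMod (2^3)))) ∧
      (a : ZMod (2^3)) * X ^ 2 + (b : ZMod (2^3)) * Y ^ 2 = Z ^ 2 := by
  obtain ⟨X0, Y0, Z0, h0', heq'⟩ := hv_normalize a b x y z h0 heq
  obtain ⟨X, Y, Z, hpar, heq2⟩ := descent a b
    (X0.valuation + Y0.valuation + Z0.valuation) X0 Y0 Z0 le_rfl h0' heq'
  refine ⟨PadicInt.toZModPow 3 X, PadicInt.toZModPow 3 Y, PadicInt.toZModPow 3 Z, ?_, ?_⟩
  · rcases hpar with h | h | h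
    exacts [Or.inl (odd_image _ h), Or.inr (Or.inl (odd_image _ h)),
      Or.inr (Or.inr (odd_image _ h))]
  · have h := congrArg (PadicInt.toZModPow 3) heq2
    simpa only [map_add, map_mul, map_pow, map_intCast] using h

private lemma intCast_eq_mod8 (k : ℤ) : (k : ZMod (2^3)) = ((k % 8 : ℤ) : ZMod (2^3)) := by
  conv_lhs => rw [← Int.mul_ediv_add_emod k 8]
  push_cast
  have h8 : (8 : ZMod (2^3)) = 0 := by decide
  rw [h8]
  ring

private lemma mod8_eq_of_cast (k : ℤ) (r : ℕ) (hr : r < 8)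
    (h : (k : ZMod (2^3)) = (r : ZMod (2^3))) : k % 8 = r := by
  have h0 : ((k - r : ℤ) : ZMod (2^3)) = 0 := by push_cast; rw [h]; ring
  rw [ZMod.intCast_zmod_eq_zero_iff_dvd] at h0
  norm_num at h0
  omega

private lemma decideA : ∀ A B X Y Z : ZMod (2^3), A ∈ ({3,7} : Finset (ZMod (2^3))) →
    B ∈ ({3,7} : Finset (ZMod (2^3))) →
    (X ∈ ({1,3,5,7} : Finset (ZMod (2^3))) ∨ Y ∈ ({1,3,5,7} : Finset (ZMod (2^3))) ∨
      Z ∈ ({1,3,5,7} : Finset (ZMod (2^3)))) →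
    A * X ^ 2 + B * Y ^ 2 ≠ Z ^ 2 := by decide

private lemma decideB : ∀ A B X Y Z : ZMod (2^3), A ∈ ({2,6} : Finset (ZMod (2^3))) →
    B ∈ ({3,7} : Finset (ZMod (2^3))) →
    (X ∈ ({1,3,5,7} : Finset (ZMod (2^3))) ∨ Y ∈ ({1,3,5,7} : Finset (ZMod (2^3))) ∨
      Z ∈ ({1,3,5,7} : Finset (ZMod (2^3)))) →
    A * X ^ 2 + B * Y ^ 2 = Z ^ 2 → A + B = 1 := by decide

private lemma decideFin : ∀ A B C E : ZMod (2^3), A ∈ ({1,5} : Finset (ZMod (2^3))) →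
    B ∈ ({3,7} : Finset (ZMod (2^3))) → C ∈ ({3,7} : Finset (ZMod (2^3))) →
    E ∈ ({2,6} : Finset (ZMod (2^3))) →
    A * B * C = 1 → E * B + C = 1 → A - B + E = 0 := by decide

private lemma cast_mem2 (k : ℤ) (r1 r2 : ℕ) (h : k % 8 = r1 ∨ k % 8 = r2) :
    (k : ZMod (2^3)) = (r1 : ZMod (2^3)) ∨ (k : ZMod (2^3)) = (r2 : ZMod (2^3)) := by
  rcases h with h | h <;> [left; right] <;>
    · rw [intCast_eq_mod8, h]; push_cast; ring

private lemma lemA (a b : ℤ) (ha : a % 8 = 3 ∨ a % 8 = 7) (hb : b % 8 = 3 ∨ b % 8 = 7) :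
    ¬ HilbertVanish2 a b := by
  rintro ⟨x, y, z, h0, heq⟩
  obtain ⟨X, Y, Z, hpar, heq8⟩ := key_mod8 a b x y z h0 heq
  have hA : (a : ZMod (2^3)) ∈ ({3,7} : Finset (ZMod (2^3))) := by
    rcases cast_mem2 a 3 7 ha with h | h <;> rw [h] <;> decide
  have hB : (b : ZMod (2^3)) ∈ ({3,7} : Finset (ZMod (2^3))) := by
    rcases cast_mem2 b 3 7 hb with h | h <;> rw [h] <;> decide
  exact decideA _ _ _ _ _ hA hB hpar heq8

private lemma lemB (a b : ℤ) (ha : a % 8 = 2 ∨ a % 8 = 6) (hb : b % 8 = 3 ∨ b % 8 = 7)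
    (hH : HilbertVanish2 a b) : (a + b) % 8 = 1 := by
  obtain ⟨x, y, z, h0, heq⟩ := hH
  obtain ⟨X, Y, Z, hpar, heq8⟩ := key_mod8 a b x y z h0 heq
  have hA : (a : ZMod (2^3)) ∈ ({2,6} : Finset (ZMod (2^3))) := by
    rcases cast_mem2 a 2 6 ha with h | h <;> rw [h] <;> decide
  have hB : (b : ZMod (2^3)) ∈ ({3,7} : Finset (ZMod (2^3))) := by
    rcases cast_mem2 b 3 7 hb with h | h <;> rw [h] <;> decide
  have h1 := decideB _ _ _ _ _ hA hB hpar heq8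
  apply mod8_eq_of_cast _ 1 (by norm_num)
  push_cast
  rw [h1]

private lemma sq_mod8 (N : ℤ) (hodd : Odd N) (r : ℚ) (hreq : (N : ℚ) = r ^ 2) :
    N % 8 = 1 := by
  have hden : r.den = 1 := by
    have h1 : (N : ℚ).den = (r ^ 2).den := congrArg Rat.den hreq
    rw [Rat.den_intCast, Rat.den_pow] at h1
    by_contra hne
    have hge : 2 ≤ r.den := by
      have := r.den_pos; omega
    have : 2 ^ 2 ≤ r.den ^ 2 := Nat.pow_le_pow_left hge 2
    omega
  have hrnum : (r.num : ℚ) = r := by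
    conv_rhs => rw [← Rat.num_div_den r]
    rw [hden]; simp
  have hNk : N = r.num ^ 2 := by
    rw [← hrnum] at hreq; exact_mod_cast hreq
  have hk : Odd r.num := by
    rcases Int.even_or_odd r.num with h | h
    · exfalso
      have : Even N := by
        rw [hNk, pow_two]; exact h.mul_right r.num
      exact (Int.not_odd_iff_even.mpr this) hodd
    · exact h
  obtain ⟨t, ht⟩ := hk
  have hN4 : N = 4 * (t * (t + 1)) + 1 := by rw [hNk, ht]; ring
  obtain ⟨s, hs⟩ := Int.even_mul_succ_self t
  omega

theorem stmt8 (e1 e2 e3 n d1 d2 d3 : ℤ)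
    (ho1 : Odd e1) (ho2 : Odd e2) (he3 : e3 = -e1 - e2)
    (hv2 : 2 ∣ e3 ∧ ¬ (4 ∣ e3)) (hn : Odd n)
    (hodd1 : Odd d1) (hodd2 : Odd d2) (hodd3 : Odd d3)
    (hsq : ∃ r : ℚ, r ≠ 0 ∧ ((d1 * d2 * d3 : ℤ) : ℚ) = r ^ 2)
    (hd1 : d1 % 4 = 1) (hd2 : d2 % 4 = 3) (hd3 : d3 % 4 = 3)
    (hH1 : HilbertVanish2 (e1 * n * d3) d1)
    (hH2 : HilbertVanish2 (e2 * n * d1) d2)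
    (hH3 : HilbertVanish2 (e3 * n * d2) d3) :
    ((d1 - e2 * n) - (d2 + e1 * n)) % 8 = 0 ∧ (e2 * n) % 4 = d1 % 4 := by
  -- e3 = 2m with m odd
  obtain ⟨m, hm⟩ := hv2.1
  have hmodd : m % 2 = 1 := by
    have := hv2.2; omega
  -- step 1 : e2*n*d1 ≡ 1 mod 4
  have ho2n : (e2 * n * d1) % 2 = 1 := Int.odd_iff.mp ((ho2.mul hn).mul hodd1)
  have hq : (e2 * n * d1) % 4 = 1 := by
    by_contra hq3
    have h3 : (e2 * n * d1) % 4 = 3 := by omega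
    exact lemA (e2 * n * d1) d2 (by omega) (by omega) hH2
  -- goal 2
  have hgoal2 : (e2 * n) % 4 = 1 := by
    have hd1' : d1 = 4 * (d1 / 4) + 1 := by omega
    have hexp : e2 * n * d1 = e2 * n + 4 * (e2 * n * (d1 / 4)) := by
      linear_combination (e2 * n) * hd1'
    omega
  -- step 2 : hH3 gives (e3*n*d2 + d3) % 8 = 1
  have hmn : (m * (n * d2)) % 2 = 1 := Int.odd_iff.mp
    ((Int.odd_iff.mpr hmodd).mul (hn.mul hodd2))
  have ha2 : (e3 * n * d2) % 4 = 2 := by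
    have : e3 * n * d2 = 2 * (m * (n * d2)) := by rw [hm]; ring
    omega
  have hB8 : (e3 * n * d2 + d3) % 8 = 1 :=
    lemB (e3 * n * d2) d3 (by omega) (by omega) hH3
  -- step 3 : d1*d2*d3 ≡ 1 mod 8
  obtain ⟨r, -, hreq⟩ := hsq
  have hD : (d1 * d2 * d3) % 8 = 1 := sq_mod8 _ ((hodd1.mul hodd2).mul hodd3) r hreq
  -- step 4 : assemble in ZMod 8
  have hA : (d1 : ZMod (2^3)) = ((1:ℕ) : ZMod (2^3)) ∨ (d1 : ZMod (2^3)) = ((5:ℕ) : ZMod (2^3)) :=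
    cast_mem2 d1 1 5 (by omega)
  have hBm : (d2 : ZMod (2^3)) = ((3:ℕ) : ZMod (2^3)) ∨ (d2 : ZMod (2^3)) = ((7:ℕ) : ZMod (2^3)) :=
    cast_mem2 d2 3 7 (by omega)
  have hCm : (d3 : ZMod (2^3)) = ((3:ℕ) : ZMod (2^3)) ∨ (d3 : ZMod (2^3)) = ((7:ℕ) : ZMod (2^3)) :=
    cast_mem2 d3 3 7 (by omega)
  have hEm : ((e3 * n : ℤ) : ZMod (2^3)) = ((2:ℕ) : ZMod (2^3)) ∨
      ((e3 * n : ℤ) : ZMod (2^3)) = ((6:ℕ) : ZMod (2^3)) := by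
    apply cast_mem2
    have : e3 * n = 2 * (m * n) := by rw [hm]; ring
    have hmn2 : (m * n) % 2 = 1 := Int.odd_iff.mp ((Int.odd_iff.mpr hmodd).mul hn)
    omega
  have hA' : (d1 : ZMod (2^3)) ∈ ({1,5} : Finset (ZMod (2^3))) := by
    rcases hA with h | h <;> rw [h] <;> decide
  have hB' : (d2 : ZMod (2^3)) ∈ ({3,7} : Finset (ZMod (2^3))) := by
    rcases hBm with h | h <;> rw [h] <;> decide
  have hC' : (d3 : ZMod (2^3)) ∈ ({3,7} : Finset (ZMod (2^3))) := by
    rcases hCm with h | h <;> rw [h] <;> decide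
  have hE' : ((e3 * n : ℤ) : ZMod (2^3)) ∈ ({2,6} : Finset (ZMod (2^3))) := by
    rcases hEm with h | h <;> rw [h] <;> decide
  have hABC : (d1 : ZMod (2^3)) * (d2 : ZMod (2^3)) * (d3 : ZMod (2^3)) = 1 := by
    have : ((d1 * d2 * d3 : ℤ) : ZMod (2^3)) = ((1:ℤ) : ZMod (2^3)) := by
      rw [intCast_eq_mod8, hD]
    push_cast at this
    exact this
  have hEeq : ((e3 * n : ℤ) : ZMod (2^3)) = (e3 : ZMod (2^3)) * (n : ZMod (2^3)) := by
    push_cast; ring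
  have hEBC : ((e3 * n : ℤ) : ZMod (2^3)) * (d2 : ZMod (2^3)) + (d3 : ZMod (2^3)) = 1 := by
    have : ((e3 * n * d2 + d3 : ℤ) : ZMod (2^3)) = ((1:ℤ) : ZMod (2^3)) := by
      rw [intCast_eq_mod8, hB8]
    push_cast at this
    rw [hEeq]
    linear_combination this
  have hfin := decideFin _ _ _ _ hA' hB' hC' hE' hABC hEBC
  rw [hEeq] at hfin
  have hcast0 : ((d1 - d2 + e3 * n : ℤ) : ZMod (2^3)) = 0 := by
    push_cast
    linear_combination hfin
  rw [ZMod.intCast_zmod_eq_zero_iff_dvd] at hcast0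
  norm_num at hcast0
  have hlin : (d1 - e2 * n) - (d2 + e1 * n) = d1 - d2 + e3 * n := by
    rw [he3]; ring
  constructor
  · omega
  · omega
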